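/- For every ε > 0 and every x ∈ ℝ, the derivative of the Yosida regularization of the logarithm satisfies ln_ε'(x) ≥ 1/(|x| + 2 + ε). -/

import Mathlib

/-- For every ε > 0 and every x ∈ ℝ, the derivative of the Yosida
regularization `ln_ε(y) = (y − ρ_ε(y))/ε` of the logarithm satisfies
`ln_ε'(x) ≥ 1/(|x| + 2 + ε)`. Here ρ_ε is the ε-resolvent of the logarithm. -/
theorem stmt4 (ε : ℝ) (hε : 0 < ε) (ρ : ℝ → ℝ)
    (hρ : ∀ x : ℝ, 0 < ρ x ∧ ρ x + ε * Real.log (ρ x) = x) (x : ℝ) :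
    deriv (fun y : ℝ => (y - ρ y) / ε) x ≥ 1 / (|x| + 2 + ε) := by
  set f : ℝ → ℝ := fun t => t + ε * Real.log t with hf
  have hfρ : ∀ y, f (ρ y) = y := fun y => (hρ y).2
  have hρpos : ∀ y, 0 < ρ y := fun y => (hρ y).1
  -- f is strictly monotone on positives
  have hfmono : ∀ u v : ℝ, 0 < u → 0 < v → u < v → f u < f v := by
    intro u v hu hv huv
    have : Real.log u < Real.log v := Real.log_lt_log hu huv
    have := mul_lt_mul_of_pos_left this hε
    simp only [hf]; linarith
  -- ρ is strictly monotone
  have hρmono : StrictMono ρ := by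
    intro a b hab
    by_contra h
    push_neg at h
    rcases lt_or_eq_of_le h with h | h
    · have := hfmono _ _ (hρpos b) (hρpos a) h
      rw [hfρ, hfρ] at this; linarith
    · have : f (ρ b) = f (ρ a) := by rw [h]
      rw [hfρ, hfρ] at this; linarith
  -- ρ's range contains (0,∞)
  have hrange : Set.Ioi (0:ℝ) ⊆ Set.range ρ := by
    intro t ht
    refine ⟨f t, ?_⟩
    have h1 : f (ρ (f t)) = f t := hfρ (f t)
    rcases lt_trichotomy (ρ (f t)) t with h | h | h
    · exact absurd h1 (ne_of_lt (hfmono _ _ (hρpos _) ht h))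
    · exact h
    · exact absurd h1 (ne_of_gt (hfmono _ _ ht (hρpos _) h))
  -- ρ is continuous at x
  have hcont : ContinuousAt ρ x := by
    apply StrictMonoOn.continuousAt_of_image_mem_nhds
      (s := Set.univ) (fun a _ b _ hab => hρmono hab) Filter.univ_mem
    rw [Set.image_univ]
    exact Filter.mem_of_superset (Ioi_mem_nhds (hρpos x)) hrange
  -- f has derivative 1 + ε / ρ x at ρ x, nonzero
  have hfd : HasDerivAt f (1 + ε * (ρ x)⁻¹) (ρ x) := by
    have h1 : HasDerivAt Real.log (ρ x)⁻¹ (ρ x) :=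
      Real.hasDerivAt_log (ne_of_gt (hρpos x))
    exact (hasDerivAt_id (ρ x)).add (h1.const_mul ε)
  have hne : (1 + ε * (ρ x)⁻¹) ≠ 0 := by
    have : 0 < ε * (ρ x)⁻¹ := mul_pos hε (inv_pos.2 (hρpos x))
    positivity
  have hρd : HasDerivAt ρ (1 + ε * (ρ x)⁻¹)⁻¹ x :=
    HasDerivAt.of_local_left_inverse hcont hfd hne (Filter.Eventually.of_forall hfρ)
  -- derivative of the Yosida regularization
  have hd : HasDerivAt (fun y : ℝ => (y - ρ y) / ε) (1 / (ρ x + ε)) x := by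
    have := ((hasDerivAt_id x).sub hρd).div_const ε
    refine this.congr_deriv ?_
    symm
    have hρx := hρpos x
    rw [eq_div_iff (ne_of_gt hε)]
    field_simp
    ring
  rw [hd.deriv]
  -- ρ x ≤ |x| + 2
  have hle : ρ x ≤ |x| + 2 := by
    rcases le_or_gt (ρ x) 1 with h | h
    · have := abs_nonneg x; linarith
    · have hlog : 0 ≤ Real.log (ρ x) := Real.log_nonneg (le_of_lt h)
      have := (hρ x).2
      nlinarith [le_abs_self x]
  have h1 : 0 < ρ x + ε := by have := hρpos x; linarith
  have h2 : 0 < |x| + 2 + ε := by have := abs_nonneg x; linarith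
  exact one_div_le_one_div_of_le h1 (by linarith)
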